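/- Let ω : ℝ^d → [0,∞) be a measurable function satisfying the subadditivity condition ω(ξ₁ + ξ₂) ≤ ω(ξ₁) + ω(ξ₂) for all ξ₁, ξ₂ ∈ ℝ^d. Then ω is bounded on every compact subset of ℝ^d. -/

import Mathlib

open MeasureTheory Pointwise

private lemma weight_smul {d : ℕ} (ω : EuclideanSpace ℝ (Fin d) → ℝ)
    (hsub : ∀ ξ₁ ξ₂, ω (ξ₁ + ξ₂) ≤ ω ξ₁ + ω ξ₂) :
    ∀ (k : ℕ) (v : EuclideanSpace ℝ (Fin d)), ω ((k + 1) • v) ≤ (k + 1) * ω v := by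
  intro k
  induction k with
  | zero => intro v; simp
  | succ k ih =>
    intro v
    have : ((k + 1 + 1) : ℕ) • v = (k+1) • v + v := by
      rw [add_smul, one_smul]
    rw [this]
    calc ω ((k+1) • v + v) ≤ ω ((k+1) • v) + ω v := hsub _ _
      _ ≤ (k+1) * ω v + ω v := by linarith [ih v]
      _ = ((k + 1 + 1 : ℕ) : ℝ) * ω v := by push_cast; ring
      _ = (((k + 1 : ℕ) : ℝ) + 1) * ω v := by push_cast; ring

/-- A nonnegative measurable subadditive weight function on ℝ^d is bounded on
every compact set. -/
theorem weight_bounded_on_compact {d : ℕ}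
    (ω : EuclideanSpace ℝ (Fin d) → ℝ)
    (hmeas : Measurable ω)
    (hnonneg : ∀ ξ, 0 ≤ ω ξ)
    (hsub : ∀ ξ₁ ξ₂, ω (ξ₁ + ξ₂) ≤ ω ξ₁ + ω ξ₂) :
    ∀ K : Set (EuclideanSpace ℝ (Fin d)), IsCompact K →
      ∃ C : ℝ, ∀ ξ ∈ K, ω ξ ≤ C := by
  intro K hK
  -- sets A n
  set A : ℕ → Set (EuclideanSpace ℝ (Fin d)) :=
    fun n => {ξ | ω ξ ≤ n ∧ ω (-ξ) ≤ n} with hA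
  have hAmeas : ∀ n, MeasurableSet (A n) := fun n =>
    (hmeas measurableSet_Iic).inter ((hmeas.comp measurable_neg) measurableSet_Iic)
  have hUnion : (⋃ n, A n) = Set.univ := by
    ext ξ
    simp only [Set.mem_iUnion, Set.mem_univ, iff_true]
    obtain ⟨n, hn⟩ := exists_nat_ge (max (ω ξ) (ω (-ξ)))
    exact ⟨n, (le_max_left _ _).trans hn, (le_max_right _ _).trans hn⟩
  -- some A n has positive measure
  have : ∃ n, 0 < volume (A n) := by
    by_contra h
    push_neg at h
    have h0 : ∀ n, volume (A n) = 0 := fun n => le_antisymm (h n) zero_le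
    have h1 : volume (⋃ n, A n) = 0 := measure_iUnion_null h0
    rw [hUnion] at h1
    simp at h1
    exact (NeZero.ne (volume : Measure (EuclideanSpace ℝ (Fin d)))) h1
  obtain ⟨n, hn⟩ := this
  -- Steinhaus
  have hst : A n - A n ∈ nhds (0 : EuclideanSpace ℝ (Fin d)) :=
    Measure.sub_mem_nhds_zero_of_addHaar_pos volume (A n) (hAmeas n) hn
  obtain ⟨r, hr, hball⟩ := Metric.mem_nhds_iff.mp hst
  -- ω ≤ 2n on ball 0 r
  have hbound : ∀ v : EuclideanSpace ℝ (Fin d), ‖v‖ < r → ω v ≤ 2 * n := by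
    intro v hv
    have : v ∈ A n - A n := hball (by simpa [Metric.mem_ball] using hv)
    obtain ⟨a, ha, b, hb, rfl⟩ := this
    show ω (a - b) ≤ 2 * n
    rw [sub_eq_add_neg]
    calc ω (a + -b) ≤ ω a + ω (-b) := hsub _ _
      _ ≤ n + n := add_le_add ha.1 hb.2
      _ = 2 * n := by ring
  -- K bounded
  obtain ⟨R, hR⟩ := hK.isBounded.subset_closedBall 0
  -- choose m with R / m < r
  obtain ⟨m, hm⟩ := exists_nat_gt (R / r)
  refine ⟨(m + 1) * (2 * n), fun ξ hξ => ?_⟩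
  have hξR : ‖ξ‖ ≤ R := by simpa using hR hξ
  have hR0 : 0 ≤ R := le_trans (norm_nonneg ξ) hξR
  set v := ((m : ℝ) + 1)⁻¹ • ξ with hv
  have hmpos : (0 : ℝ) < (m : ℝ) + 1 := by positivity
  have hvnorm : ‖v‖ < r := by
    rw [hv, norm_smul]
    have h1 : ‖((m : ℝ) + 1)⁻¹‖ = ((m : ℝ) + 1)⁻¹ := by
      rw [Real.norm_eq_abs, abs_of_pos (by positivity)]
    rw [h1]
    rw [inv_mul_lt_iff₀ hmpos]
    calc ‖ξ‖ ≤ R := hξR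
      _ = (R / r) * r := by field_simp
      _ < m * r := by
          apply mul_lt_mul_of_pos_right hm hr
      _ ≤ ((m : ℝ) + 1) * r := by nlinarith [hr.le]
  have hrec : ξ = (m + 1) • v := by
    rw [hv, ← Nat.cast_smul_eq_nsmul ℝ, smul_smul]
    rw [show (((m + 1 : ℕ) : ℝ) * ((↑m + 1)⁻¹)) = 1 by
      push_cast; exact mul_inv_cancel₀ hmpos.ne']
    rw [one_smul]
  calc ω ξ = ω ((m + 1) • v) := by rw [hrec]
    _ ≤ (m + 1) * ω v := weight_smul ω hsub m v
    _ ≤ (m + 1) * (2 * n) := by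
        apply mul_le_mul_of_nonneg_left (hbound v hvnorm) (by positivity)
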